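/- The simple graph on Fin n whose edges are the unordered pairs {i, j} with A i j is a tree (it is connected and acyclic), and it has exactly n − 1 edges; equivalently, the set of pairs (i, j) with A i j has cardinality n − 1. -/

import Mathlib

open SimpleGraph

/-- The simple graph on `Fin n` whose edges are the unordered pairs
`{i, j}` with `A i j` is a tree, and it has exactly `n - 1` edges; equivalently,
the set of pairs `(i, j)` with `A i j` has cardinality `n - 1`. -/
theorem stmt_2 {n : ℕ} (hn : 0 < n) {T : Type*} (t : Fin n → T) (D : Set T)
    (h0 : t ⟨0, hn⟩ ∉ D)
    (A : Fin n → Fin n → Prop)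
    (hA : ∀ i j : Fin n, A i j ↔ i < j ∧ t i ∉ D ∧ ∀ k : Fin n, i < k → k < j → t k ∈ D) :
    (SimpleGraph.fromRel A).IsTree ∧
    (SimpleGraph.fromRel A).edgeSet.ncard = n - 1 ∧
    {p : Fin n × Fin n | A p.1 p.2}.ncard = n - 1 := by
  classical
  set z : Fin n := ⟨0, hn⟩ with hz
  have hAlt : ∀ {i j : Fin n}, A i j → i < j := fun h => ((hA _ _).1 h).1
  -- uniqueness of the parent
  have huniq : ∀ {i i' j : Fin n}, A i j → A i' j → i = i' := by
    intro i i' j h h'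
    rw [hA] at h h'
    by_contra hne
    rcases lt_or_gt_of_ne hne with hlt | hlt
    · exact h'.2.1 (h.2.2 i' hlt h'.1)
    · exact h.2.1 (h'.2.2 i hlt h.1)
  -- existence of the parent
  have hex : ∀ j : Fin n, j ≠ z → ∃ i, A i j := by
    intro j hj
    have hzj : z < j := by
      refine lt_of_le_of_ne ?_ (Ne.symm hj)
      exact Fin.mk_le_of_le_val (Nat.zero_le _)
    set S : Finset (Fin n) := Finset.univ.filter (fun i => i < j ∧ t i ∉ D) with hS
    have hzS : z ∈ S := by simp [hS, hzj, h0]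
    have hSne : S.Nonempty := ⟨z, hzS⟩
    set i := S.max' hSne with hi
    have hiS : i ∈ S := S.max'_mem hSne
    simp only [hS, Finset.mem_filter, Finset.mem_univ, true_and] at hiS
    refine ⟨i, (hA i j).2 ⟨hiS.1, hiS.2, ?_⟩⟩
    intro k hik hkj
    by_contra hk
    have hkS : k ∈ S := by simp [hS, hkj, hk]
    have := S.le_max' k hkS
    rw [← hi] at this
    exact absurd (lt_of_lt_of_le hik this) (lt_irrefl _)
  -- adjacency characterization
  have hadj : ∀ {x y : Fin n}, (fromRel A).Adj x y ↔ A x y ∨ A y x := by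
    intro x y
    rw [SimpleGraph.fromRel_adj]
    constructor
    · exact fun h => h.2
    · intro h
      refine ⟨?_, h⟩
      rcases h with h | h
      · exact (hAlt h).ne
      · exact (hAlt h).ne'
  -- connectivity
  have hconn : (fromRel A).Connected := by
    rw [connected_iff]
    refine ⟨?_, ⟨z⟩⟩
    have key : ∀ m : ℕ, ∀ j : Fin n, j.val ≤ m → (fromRel A).Reachable j z := by
      intro m
      induction m with
      | zero =>
        intro j hj
        have : j = z := Fin.ext (Nat.le_zero.mp hj)
        rw [this]
      | succ m ih =>
        intro j hj
        by_cases h : j = z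
        · rw [h]
        · obtain ⟨i, hAij⟩ := hex j h
          have hij : i.val < j.val := hAlt hAij
          have h1 : (fromRel A).Adj j i := hadj.2 (Or.inr hAij)
          exact (h1.reachable).trans (ih i (by omega))
    intro u v
    exact (key n u u.isLt.le).trans (key n v v.isLt.le).symm
  -- acyclicity
  have hacyc : (fromRel A).IsAcyclic := by
    intro v c hc
    -- maximum vertex of the cycle
    obtain ⟨j, hjmem, hjmax⟩ : ∃ j ∈ c.support, ∀ x ∈ c.support, x ≤ j := by
      have hne : c.support.toFinset.Nonempty := by
        simp [List.toFinset_nonempty_iff, c.support_ne_nil]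
      refine ⟨c.support.toFinset.max' hne, ?_, ?_⟩
      · simpa using c.support.toFinset.max'_mem hne
      · intro x hx
        exact c.support.toFinset.le_max' x (by simpa using hx)
    set c₂ := c.rotate j hjmem with hc₂def
    have hc₂ : c₂.IsCycle := hc.rotate hjmem
    have hsup : ∀ x ∈ c₂.support, x ≤ j := by
      intro x hx
      rw [c₂.support_eq_cons] at hx
      rcases List.mem_cons.mp hx with h | h
      · exact le_of_eq h
      · have : x ∈ c.support.tail := ((Walk.support_rotate c j hjmem).mem_iff).mp h
        refine hjmax x ?_
        rw [c.support_eq_cons]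
        exact List.mem_cons_of_mem _ this
    have hnn : ¬ c₂.Nil := hc₂.not_nil
    obtain ⟨w, hw, q, hq⟩ := Walk.not_nil_iff.mp hnn
    have hnn' : ¬ c₂.reverse.Nil := by
      rw [Walk.not_nil_iff_lt_length, Walk.length_reverse]
      rw [Walk.not_nil_iff_lt_length] at hnn
      exact hnn
    obtain ⟨w', hw', q', hq'⟩ := Walk.not_nil_iff.mp hnn'
    -- w and w' are neighbors of j below j
    have hwmem : w ∈ c₂.support := by
      rw [hq, Walk.support_cons]
      exact List.mem_cons_of_mem _ q.start_mem_support
    have hw'mem : w' ∈ c₂.support := by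
      have : w' ∈ c₂.reverse.support := by
        rw [hq', Walk.support_cons]
        exact List.mem_cons_of_mem _ q'.start_mem_support
      rw [Walk.support_reverse, List.mem_reverse] at this
      exact this
    have hwlt : w < j := lt_of_le_of_ne (hsup w hwmem) hw.ne'
    have hw'lt : w' < j := lt_of_le_of_ne (hsup w' hw'mem) hw'.ne'
    have hAwj : A w j := by
      rcases hadj.1 hw with h | h
      · exact absurd (hAlt h) (asymm hwlt)
      · exact h
    have hAw'j : A w' j := by
      rcases hadj.1 hw' with h | h
      · exact absurd (hAlt h) (asymm hw'lt)
      · exact h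
    have hww' : w = w' := huniq hAwj hAw'j
    -- first and last edges coincide, contradicting nodup edges
    have he1 : c₂.edges = s(j, w) :: q.edges := by rw [hq, Walk.edges_cons]
    have he2 : c₂.edges.reverse = s(j, w) :: q'.edges := by
      rw [← Walk.edges_reverse, hq', Walk.edges_cons, hww']
    have hlen : 3 ≤ c₂.length := hc₂.three_le_length
    have hqne : q.edges ≠ [] := by
      have : q.edges.length = c₂.length - 1 := by
        rw [Walk.length_edges, hq, Walk.length_cons]
        omega
      intro hnil
      rw [hnil] at this
      simp at this
      omega
    have hnodup : (s(j, w) :: q.edges).Nodup := he1 ▸ hc₂.edges_nodup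
    have he3 : s(j, w) :: q.edges = q'.edges.reverse ++ [s(j, w)] := by
      rw [← he1, ← List.reverse_reverse c₂.edges, he2, List.reverse_cons]
    have hmem : s(j, w) ∈ q.edges := by
      have h2 : (s(j, w) :: q.edges).getLast? = some s(j, w) := by
        rw [he3, List.getLast?_concat]
      obtain ⟨e0, es, hqe⟩ := List.exists_cons_of_ne_nil hqne
      rw [hqe, List.getLast?_cons_cons] at h2
      rw [hqe]
      obtain ⟨hne, hgl⟩ := List.mem_getLast?_eq_getLast
        (show s(j, w) ∈ (e0 :: es).getLast? from h2)
      rw [hgl]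
      exact List.getLast_mem hne
    exact (List.nodup_cons.mp hnodup).1 hmem
  -- the parent function
  have hparent : ∀ j : Fin n, j ≠ z → ∃ i, A i j := hex
  set pa : Fin n → Fin n := fun j => if h : ∃ i, A i j then h.choose else j with hpa
  have hpaA : ∀ j : Fin n, j ≠ z → A (pa j) j := by
    intro j hj
    have h := hex j hj
    simp only [hpa, dif_pos h]
    exact h.choose_spec
  -- the pair set as an image
  have hP : {p : Fin n × Fin n | A p.1 p.2} = (fun j => (pa j, j)) '' {j | j ≠ z} := by
    ext ⟨i, j⟩
    simp only [Set.mem_setOf_eq, Set.mem_image]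
    constructor
    · intro h
      have hj : j ≠ z := by
        intro hjz
        have := hAlt h
        rw [hjz] at this
        exact absurd (Fin.mk_le_of_le_val (Nat.zero_le i.val) : z ≤ i) (not_le_of_gt this)
      exact ⟨j, hj, by rw [huniq (hpaA j hj) h]⟩
    · rintro ⟨j', hj', heq⟩
      obtain ⟨h1, h2⟩ := Prod.mk.injEq .. ▸ heq
      rw [← h1, ← h2]
      exact hpaA j' hj'
  have hPn : {p : Fin n × Fin n | A p.1 p.2}.ncard = n - 1 := by
    rw [hP, Set.ncard_image_of_injOn (fun a _ b _ hab => by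
      simpa using congrArg Prod.snd hab)]
    have : {j : Fin n | j ≠ z} = Set.univ \ {z} := by
      ext x; simp
    rw [this, Set.ncard_diff (Set.subset_univ _), Set.ncard_univ, Set.ncard_singleton]
    simp
  -- edge set as an image
  have hE : (fromRel A).edgeSet
      = (fun p : Fin n × Fin n => s(p.1, p.2)) '' {p : Fin n × Fin n | A p.1 p.2} := by
    ext e
    induction e with
    | _ x y =>
      simp only [mem_edgeSet, Set.mem_image, Set.mem_setOf_eq]
      rw [hadj]
      constructor
      · rintro (h | h)
        · exact ⟨(x, y), h, rfl⟩
        · exact ⟨(y, x), h, Sym2.eq_swap⟩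
      · rintro ⟨⟨a, b⟩, hab, habe⟩
        rcases Sym2.eq_iff.mp habe with ⟨h1, h2⟩ | ⟨h1, h2⟩
        · left; rwa [← h1, ← h2]
        · right; rwa [← h1, ← h2]
  have hEn : (fromRel A).edgeSet.ncard = n - 1 := by
    rw [hE, Set.ncard_image_of_injOn, hPn]
    rintro ⟨a, b⟩ hab ⟨a', b'⟩ hab' heq
    simp only [Set.mem_setOf_eq] at hab hab'
    rcases Sym2.eq_iff.mp heq with ⟨h1, h2⟩ | ⟨h1, h2⟩
    · exact Prod.ext h1 h2
    · exfalso
      have := hAlt hab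
      have := hAlt hab'
      subst h1; subst h2
      exact absurd (hAlt hab) (asymm (hAlt hab'))
  exact ⟨⟨hconn, hacyc⟩, hEn, hPn⟩
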